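/- Let B_θ, B_z : (0,∞) → ℝ be C² with B_θ(r)² + B_z(r)² > 0 for all r, and let λ, α : (0,∞) → ℝ be C¹ and satisfy the ODE system dB_z/dr + α B_θ + λ B_z = 0 and dB_θ/dr + B_θ/r − α B_z + λ B_θ = 0. Define B = B_θ(r) e_θ + B_z(r) e_z and B_f⊥ = B_z(r) e_θ − B_θ(r) e_z on the region x²+y² > 0 of ℝ³. Then ∇×(∇×B) = (2αλ − dα/dr − λ·2B_θB_z/(r‖B‖²)) B_f⊥ + (dλ/dr − λ² + α² + λ(B_z² − B_θ²)/(r‖B‖²)) B, where ‖B‖² = B_θ(r)² + B_z(r)². Consequently, under quasistatic resistive evolution ∂B/∂t = −η∇×(∇×B), the topology-changing (B_f⊥) component vanishes exactly when 2αλ − dα/dr − 2λB_θB_z/(r‖B‖²) = 0. -/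

import Mathlib

open RealInnerProductSpace

/-- The curl `∇×V = (∂₂V₃ − ∂₃V₂, ∂₃V₁ − ∂₁V₃, ∂₁V₂ − ∂₂V₁)` of a vector field on ℝ³. -/
noncomputable def curl3 (V : EuclideanSpace ℝ (Fin 3) → EuclideanSpace ℝ (Fin 3))
    (x : EuclideanSpace ℝ (Fin 3)) : EuclideanSpace ℝ (Fin 3) :=
  (EuclideanSpace.equiv (Fin 3) ℝ).symm
    ![fderiv ℝ V x (EuclideanSpace.single 1 1) 2 - fderiv ℝ V x (EuclideanSpace.single 2 1) 1,
      fderiv ℝ V x (EuclideanSpace.single 2 1) 0 - fderiv ℝ V x (EuclideanSpace.single 0 1) 2,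
      fderiv ℝ V x (EuclideanSpace.single 0 1) 1 - fderiv ℝ V x (EuclideanSpace.single 1 1) 0]

/-- The cylindrical radius `r = √(x² + y²)`. -/
noncomputable def rad (p : EuclideanSpace ℝ (Fin 3)) : ℝ := Real.sqrt (p 0 ^ 2 + p 1 ^ 2)

/-- The azimuthal unit vector `e_θ = (−y/r, x/r, 0)`. -/
noncomputable def etheta (p : EuclideanSpace ℝ (Fin 3)) : EuclideanSpace ℝ (Fin 3) :=
  (EuclideanSpace.equiv (Fin 3) ℝ).symm ![-(p 1) / rad p, p 0 / rad p, 0]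

/-- The vertical unit vector `e_z = (0,0,1)`. -/
noncomputable def ez3 : EuclideanSpace ℝ (Fin 3) := EuclideanSpace.single 2 1

noncomputable abbrev stmt15.prj (i : Fin 3) : EuclideanSpace ℝ (Fin 3) →L[ℝ] ℝ :=
  EuclideanSpace.proj i

namespace stmt15

@[simp] lemma prj_apply (i : Fin 3) (x : EuclideanSpace ℝ (Fin 3)) : prj i x = x i := rfl

noncomputable def Jmap : EuclideanSpace ℝ (Fin 3) →L[ℝ] EuclideanSpace ℝ (Fin 3) :=
  ((EuclideanSpace.equiv (Fin 3) ℝ).symm : (Fin 3 → ℝ) →L[ℝ] EuclideanSpace ℝ (Fin 3)).comp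
    (ContinuousLinearMap.pi ![-(prj 1), prj 0, 0])

@[simp] lemma Jmap_apply (q : EuclideanSpace ℝ (Fin 3)) (i : Fin 3) :
    Jmap q i = ![-(q 1), q 0, 0] i := by
  fin_cases i <;> simp [Jmap]

@[simp] lemma equiv_symm_apply (v : Fin 3 → ℝ) (i : Fin 3) :
    (EuclideanSpace.equiv (Fin 3) ℝ).symm v i = v i := rfl

@[simp] lemma ez3_apply (i : Fin 3) : ez3 i = ![0,0,1] i := by
  fin_cases i <;> simp [ez3, EuclideanSpace.single_apply]

@[simp] lemma etheta_apply (p : EuclideanSpace ℝ (Fin 3)) (i : Fin 3) :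
    etheta p i = ![-(p 1) / rad p, p 0 / rad p, 0] i := rfl

lemma hasFDerivAt_rad (p : EuclideanSpace ℝ (Fin 3)) (hp : 0 < p 0 ^ 2 + p 1 ^ 2) :
    HasFDerivAt rad ((p 0 / rad p) • prj 0 + (p 1 / rad p) • prj 1) p := by
  have h0 : HasFDerivAt (fun q : EuclideanSpace ℝ (Fin 3) => q 0 ^ 2 + q 1 ^ 2)
      (((2:ℝ) * p 0 ^ 1) • prj 0 + ((2:ℝ) * p 1 ^ 1) • prj 1) p :=
    by have h := (((hasDerivAt_pow 2 (p 0)).comp_hasFDerivAt p (prj 0).hasFDerivAt).add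
      ((hasDerivAt_pow 2 (p 1)).comp_hasFDerivAt p (prj 1).hasFDerivAt)); simp at h ⊢; exact h
  have h1 := (Real.hasDerivAt_sqrt (ne_of_gt hp)).comp_hasFDerivAt p h0
  have hr : (0:ℝ) < rad p := Real.sqrt_pos.2 hp
  refine h1.congr_fderiv ?_
  ext v
  simp [rad]
  field_simp [rad] at *

lemma key (f g : ℝ → ℝ) (fr' gr' : ℝ) (p : EuclideanSpace ℝ (Fin 3))
    (hp : 0 < p 0 ^ 2 + p 1 ^ 2)
    (hf : HasDerivAt f fr' (rad p)) (hg : HasDerivAt g gr' (rad p)) :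
    curl3 (fun q => f (rad q) • etheta q + g (rad q) • ez3) p
      = (-gr') • etheta p + (fr' + f (rad p) / rad p) • ez3 := by
  have hr : (0:ℝ) < rad p := Real.sqrt_pos.2 hp
  have hfun : (fun q => f (rad q) • etheta q + g (rad q) • ez3)
      = fun q => (f (rad q) / rad q) • Jmap q + g (rad q) • ez3 := by
    funext q
    apply PiLp.ext
    intro i
    fin_cases i <;> simp <;> ring
  rw [hfun]
  have hrad := hasFDerivAt_rad p hp
  have hfr : HasFDerivAt (fun q => f (rad q) / rad q)
      (((fr' * rad p - f (rad p) * 1) / rad p ^ 2) •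
        ((p 0 / rad p) • prj 0 + (p 1 / rad p) • prj 1)) p :=
    (hf.div (hasDerivAt_id (rad p)) hr.ne').comp_hasFDerivAt p hrad
  have hgr : HasFDerivAt (fun q => g (rad q))
      (gr' • ((p 0 / rad p) • prj 0 + (p 1 / rad p) • prj 1)) p :=
    hg.comp_hasFDerivAt p hrad
  have hW := (hfr.smul Jmap.hasFDerivAt).add (hgr.smul_const ez3)
  unfold curl3
  rw [show (fun q => (f (rad q) / rad q) • Jmap q + g (rad q) • ez3) =
      (fun q => f (rad q) / rad q) • ⇑Jmap + fun y => g (rad y) • ez3 from rfl, hW.fderiv]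
  apply PiLp.ext
  intro i
  have h0 : p 0 ^ 2 + p 1 ^ 2 = rad p ^ 2 := by
    rw [rad, Real.sq_sqrt hp.le]
  fin_cases i <;>
    simp [EuclideanSpace.single_apply, ContinuousLinearMap.smulRight_apply] <;>
    (try field_simp) <;> (try ring) <;>
    linear_combination (rad p * fr' - f (rad p)) * h0

lemma curl3_congr {V W : EuclideanSpace ℝ (Fin 3) → EuclideanSpace ℝ (Fin 3)}
    {p : EuclideanSpace ℝ (Fin 3)} (h : V =ᶠ[nhds p] W) : curl3 V p = curl3 W p := by
  unfold curl3
  rw [h.fderiv_eq]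

end stmt15

/-- under the flux-rope ODE system with C¹ `λ, α`,
`∇×(∇×B) = (2αλ − α' − 2λB_θB_z/(r‖B‖²)) B_f⊥ + (λ' − λ² + α² + λ(B_z² − B_θ²)/(r‖B‖²)) B`
on the region `x² + y² > 0`; consequently under `∂B/∂t = −η∇×(∇×B)` the
topology-changing (`B_f⊥`) component vanishes exactly when
`2αλ − α' − 2λB_θB_z/(r‖B‖²) = 0`. -/
theorem stmt_15 (Bθ Bz Bθ' Bz' lam alp lam' alp' : ℝ → ℝ)
    (hBθ : ∀ r > (0:ℝ), HasDerivAt Bθ (Bθ' r) r)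
    (hBz : ∀ r > (0:ℝ), HasDerivAt Bz (Bz' r) r)
    (hlam : ∀ r > (0:ℝ), HasDerivAt lam (lam' r) r)
    (halp : ∀ r > (0:ℝ), HasDerivAt alp (alp' r) r)
    (hlamc : ContinuousOn lam' (Set.Ioi 0)) (halpc : ContinuousOn alp' (Set.Ioi 0))
    (hpos : ∀ r > (0:ℝ), 0 < Bθ r ^ 2 + Bz r ^ 2)
    (hode1 : ∀ r > (0:ℝ), Bz' r + alp r * Bθ r + lam r * Bz r = 0)
    (hode2 : ∀ r > (0:ℝ), Bθ' r + Bθ r / r - alp r * Bz r + lam r * Bθ r = 0)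
    (B Bf : EuclideanSpace ℝ (Fin 3) → EuclideanSpace ℝ (Fin 3))
    (hB : ∀ p, B p = Bθ (rad p) • etheta p + Bz (rad p) • ez3)
    (hBf : ∀ p, Bf p = Bz (rad p) • etheta p - Bθ (rad p) • ez3) :
    ∀ p : EuclideanSpace ℝ (Fin 3), 0 < p 0 ^ 2 + p 1 ^ 2 →
      curl3 (curl3 B) p =
        (2 * alp (rad p) * lam (rad p) - alp' (rad p) -
            lam (rad p) * (2 * Bθ (rad p) * Bz (rad p)) /
              (rad p * (Bθ (rad p) ^ 2 + Bz (rad p) ^ 2))) • Bf p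
        + (lam' (rad p) - lam (rad p) ^ 2 + alp (rad p) ^ 2 +
            lam (rad p) * (Bz (rad p) ^ 2 - Bθ (rad p) ^ 2) /
              (rad p * (Bθ (rad p) ^ 2 + Bz (rad p) ^ 2))) • B p ∧
      (curl3 (curl3 B) p =
          (lam' (rad p) - lam (rad p) ^ 2 + alp (rad p) ^ 2 +
            lam (rad p) * (Bz (rad p) ^ 2 - Bθ (rad p) ^ 2) /
              (rad p * (Bθ (rad p) ^ 2 + Bz (rad p) ^ 2))) • B p ↔
        2 * alp (rad p) * lam (rad p) - alp' (rad p) -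
            lam (rad p) * (2 * Bθ (rad p) * Bz (rad p)) /
              (rad p * (Bθ (rad p) ^ 2 + Bz (rad p) ^ 2)) = 0) := by
  classical
  -- curl B on the region
  have hcurlB : ∀ q : EuclideanSpace ℝ (Fin 3), 0 < q 0 ^ 2 + q 1 ^ 2 →
      curl3 B q = (fun t => lam t * Bz t + alp t * Bθ t) (rad q) • etheta q
        + (fun t => alp t * Bz t - lam t * Bθ t) (rad q) • ez3 := by
    intro q hq
    have hrq : (0:ℝ) < rad q := Real.sqrt_pos.2 hq
    have hBfun : B = fun q => Bθ (rad q) • etheta q + Bz (rad q) • ez3 := funext hB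
    rw [hBfun, stmt15.key Bθ Bz (Bθ' (rad q)) (Bz' (rad q)) q hq (hBθ _ hrq) (hBz _ hrq)]
    have e1 : -Bz' (rad q) = lam (rad q) * Bz (rad q) + alp (rad q) * Bθ (rad q) := by
      have := hode1 (rad q) hrq; linarith
    have e2 : Bθ' (rad q) + Bθ (rad q) / rad q
        = alp (rad q) * Bz (rad q) - lam (rad q) * Bθ (rad q) := by
      have := hode2 (rad q) hrq; linarith
    rw [e1, e2]
  intro p hp
  have hr : (0:ℝ) < rad p := Real.sqrt_pos.2 hp
  have hNpos := hpos (rad p) hr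
  -- curl curl B at p
  have hopen : IsOpen {q : EuclideanSpace ℝ (Fin 3) | 0 < q 0 ^ 2 + q 1 ^ 2} := by
    have hc : Continuous fun q : EuclideanSpace ℝ (Fin 3) => q 0 ^ 2 + q 1 ^ 2 := by
      exact (((stmt15.prj 0).continuous.pow 2).add ((stmt15.prj 1).continuous.pow 2))
    exact isOpen_lt continuous_const hc
  have heq : curl3 B =ᶠ[nhds p] (fun q =>
      (fun t => lam t * Bz t + alp t * Bθ t) (rad q) • etheta q
        + (fun t => alp t * Bz t - lam t * Bθ t) (rad q) • ez3) := by
    filter_upwards [hopen.mem_nhds hp] with q hq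
    exact hcurlB q hq
  have hccB : curl3 (curl3 B) p = curl3 (fun q =>
      (fun t => lam t * Bz t + alp t * Bθ t) (rad q) • etheta q
        + (fun t => alp t * Bz t - lam t * Bθ t) (rad q) • ez3) p :=
    stmt15.curl3_congr heq
  have hdf : HasDerivAt (fun t => lam t * Bz t + alp t * Bθ t)
      (lam' (rad p) * Bz (rad p) + lam (rad p) * Bz' (rad p)
        + (alp' (rad p) * Bθ (rad p) + alp (rad p) * Bθ' (rad p))) (rad p) :=
    ((hlam _ hr).mul (hBz _ hr)).add ((halp _ hr).mul (hBθ _ hr))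
  have hdg : HasDerivAt (fun t => alp t * Bz t - lam t * Bθ t)
      (alp' (rad p) * Bz (rad p) + alp (rad p) * Bz' (rad p)
        - (lam' (rad p) * Bθ (rad p) + lam (rad p) * Bθ' (rad p))) (rad p) :=
    ((halp _ hr).mul (hBz _ hr)).sub ((hlam _ hr).mul (hBθ _ hr))
  rw [stmt15.key _ _ _ _ p hp hdf hdg] at hccB
  have hBz'eq : Bz' (rad p) = -(alp (rad p) * Bθ (rad p)) - lam (rad p) * Bz (rad p) := by
    have := hode1 (rad p) hr; linarith
  have hBθ'eq : Bθ' (rad p) = alp (rad p) * Bz (rad p) - lam (rad p) * Bθ (rad p)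
      - Bθ (rad p) / rad p := by
    have := hode2 (rad p) hr; linarith
  have hmain : curl3 (curl3 B) p =
      (2 * alp (rad p) * lam (rad p) - alp' (rad p) -
          lam (rad p) * (2 * Bθ (rad p) * Bz (rad p)) /
            (rad p * (Bθ (rad p) ^ 2 + Bz (rad p) ^ 2))) • Bf p
      + (lam' (rad p) - lam (rad p) ^ 2 + alp (rad p) ^ 2 +
          lam (rad p) * (Bz (rad p) ^ 2 - Bθ (rad p) ^ 2) /
            (rad p * (Bθ (rad p) ^ 2 + Bz (rad p) ^ 2))) • B p := by
    rw [hccB, hBf p, hB p]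
    apply PiLp.ext
    intro i
    rw [hBz'eq, hBθ'eq]
    fin_cases i <;>
      simp [smul_sub, smul_add, smul_smul] <;>
      field_simp <;> ring
  refine ⟨hmain, ?_, ?_⟩
  · intro h
    have hz : (2 * alp (rad p) * lam (rad p) - alp' (rad p) -
        lam (rad p) * (2 * Bθ (rad p) * Bz (rad p)) /
          (rad p * (Bθ (rad p) ^ 2 + Bz (rad p) ^ 2))) • Bf p = 0 := by
      have := hmain.symm.trans h
      rw [add_comm] at this
      nth_rewrite 2 [← add_zero ((lam' (rad p) - lam (rad p) ^ 2 + alp (rad p) ^ 2 +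
          lam (rad p) * (Bz (rad p) ^ 2 - Bθ (rad p) ^ 2) /
            (rad p * (Bθ (rad p) ^ 2 + Bz (rad p) ^ 2))) • B p)] at this
      exact add_left_cancel this
    rcases smul_eq_zero.1 hz with hc | hv
    · exact hc
    · exfalso
      have h2 : Bf p 2 = 0 := by rw [hv]; rfl
      have h0' : Bf p 0 = 0 := by rw [hv]; rfl
      have h1' : Bf p 1 = 0 := by rw [hv]; rfl
      rw [hBf p] at h2 h0' h1'
      simp at h2 h0' h1'
      have hθ0 : Bθ (rad p) = 0 := by
        simpa using h2
      have hz0 : Bz (rad p) = 0 := by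
        rcases (show p 0 ≠ 0 ∨ p 1 ≠ 0 by
          by_contra hcon
          push_neg at hcon
          rw [hcon.1, hcon.2] at hp; simp at hp) with h | h
        · have := h1'
          rcases this with h' | h' | h'
          · exact h'
          · exact absurd h' h
          · exact absurd h' hr.ne'
        · have := h0'
          rcases this with h' | h' | h'
          · exact h'
          · exact absurd h' h
          · exact absurd h' hr.ne'
      rw [hθ0, hz0] at hNpos; simp at hNpos
  · intro h
    rw [hmain, h, zero_smul, zero_add]
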